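/- arXiv:2005.02056 — 4 statements merged into one kernel-verified Lean document; each statement's English description precedes it below -/
import Mathlib

section
/- Let Diagram 1 of abelian groups be given and let (X, i, j, m, n) be an extension of Diagram 1. Let Y = F ×_Q G be the pullback of F → Q and G → Q. Then the map (m,n) : X → Y, x ↦ (m(x), n(x)), is a well-defined surjective homomorphism whose kernel is exactly the image of the injective map i∘μ : P → X; that is, the sequence 0 → P →^{i∘μ} X →^{(m,n)} Y → 0 is short exact. In particular, ker(m) ∩ ker(n) = (i∘μ)(P) = (j∘ν)(P). -/
universe u

variable {F G Q : Type u} [AddCommGroup F] [AddCommGroup G] [AddCommGroup Q]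

/-- The pullback `Y = F ×_Q G = {(f,g) ∈ F × G : πF f = πG g}` of `πF : F → Q`
and `πG : G → Q`, as a subgroup of `F × G`. -/
def pullbackSubgroup (πF : F →+ Q) (πG : G →+ Q) : AddSubgroup (F × G) where
  carrier := {p | πF p.1 = πG p.2}
  zero_mem' := by simp
  add_mem' := by
    intro a b ha hb
    simp only [Set.mem_setOf_eq, Prod.fst_add, Prod.snd_add, map_add] at *
    rw [ha, hb]
  neg_mem' := by
    intro a ha
    simp only [Set.mem_setOf_eq, Prod.fst_neg, Prod.snd_neg, map_neg] at *
    rw [ha]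

/-- The map `(m, n) : X → Y = F ×_Q G`, `x ↦ (m x, n x)`, well defined because
`πF ∘ m = πG ∘ n`. -/
def toPullback {X : Type u} [AddCommGroup X] (m : X →+ F) (n : X →+ G)
    (πF : F →+ Q) (πG : G →+ Q) (hsq : πF.comp m = πG.comp n) :
    X →+ pullbackSubgroup πF πG :=
  AddMonoidHom.codRestrict (m.prod n) _ (fun x => DFunLike.congr_fun hsq x)

/-- Given Diagram 1 of abelian groups and an extension `(X, i, j, m, n)` of it, the map
`(m,n) : X → Y = F ×_Q G` is a surjective homomorphism whose kernel is exactly the image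
of the injective map `i∘μ : P → X`; that is, `0 → P → X → Y → 0` is short exact.
In particular `ker m ∩ ker n = (i∘μ)(P) = (j∘ν)(P)`. -/
theorem extension_gives_shortExact_over_pullback
    {P E R H S X : Type u} [AddCommGroup P] [AddCommGroup E] [AddCommGroup R]
    [AddCommGroup H] [AddCommGroup S] [AddCommGroup X]
    -- row 1 : 0 → P → E → R → 0
    (ν : P →+ E) (πE : E →+ R)
    (hν : Function.Injective ν) (hπE : Function.Surjective πE)
    (hrow1 : AddMonoidHom.ker πE = AddMonoidHom.range ν)
    -- row 2 : 0 → S → G → Q → 0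
    (σ : S →+ G) (πG : G →+ Q)
    (hσ : Function.Injective σ) (hπG : Function.Surjective πG)
    (hrow2 : AddMonoidHom.ker πG = AddMonoidHom.range σ)
    -- column 1 : 0 → P → H → S → 0
    (μ : P →+ H) (πH : H →+ S)
    (hμ : Function.Injective μ) (hπH : Function.Surjective πH)
    (hcol1 : AddMonoidHom.ker πH = AddMonoidHom.range μ)
    -- column 2 : 0 → R → F → Q → 0
    (ρ : R →+ F) (πF : F →+ Q)
    (hρ : Function.Injective ρ) (hπF : Function.Surjective πF)
    (hcol2 : AddMonoidHom.ker πF = AddMonoidHom.range ρ)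
    -- the extension (X, i, j, m, n) of Diagram 1
    (i : H →+ X) (j : E →+ X) (m : X →+ F) (n : X →+ G)
    -- middle row 0 → H → X → F → 0
    (hi : Function.Injective i) (hm : Function.Surjective m)
    (hmidrow : AddMonoidHom.ker m = AddMonoidHom.range i)
    -- middle column 0 → E → X → G → 0
    (hj : Function.Injective j) (hn : Function.Surjective n)
    (hmidcol : AddMonoidHom.ker n = AddMonoidHom.range j)
    -- commuting squares
    (hsq1 : i.comp μ = j.comp ν)
    (hsq2 : m.comp j = ρ.comp πE)
    (hsq3 : n.comp i = σ.comp πH)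
    (hsq4 : πF.comp m = πG.comp n) :
    Function.Injective (i.comp μ) ∧
    Function.Surjective (toPullback m n πF πG hsq4) ∧
    AddMonoidHom.ker (toPullback m n πF πG hsq4) = AddMonoidHom.range (i.comp μ) ∧
    AddMonoidHom.ker m ⊓ AddMonoidHom.ker n = AddMonoidHom.range (i.comp μ) ∧
    AddMonoidHom.range (i.comp μ) = AddMonoidHom.range (j.comp ν) := by
  -- facts
  have hiμ : ∀ h, m (i h) = 0 := fun h => by
    have : i h ∈ AddMonoidHom.ker m := by rw [hmidrow]; exact ⟨h, rfl⟩
    simpa using this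
  have hni : ∀ h, n (i h) = σ (πH h) := fun h => DFunLike.congr_fun hsq3 h
  have hπHμ : ∀ p, πH (μ p) = 0 := fun p => by
    have : μ p ∈ AddMonoidHom.ker πH := by rw [hcol1]; exact ⟨p, rfl⟩
    simpa using this
  refine ⟨fun a b hab => hμ (hi (by simpa using hab)), ?_, ?_, ?_, ?_⟩
  · -- surjectivity
    rintro ⟨⟨f, g⟩, hfg⟩
    obtain ⟨x, hx⟩ := hm f
    have hker : g - n x ∈ AddMonoidHom.ker πG := by
      have h1 : πF (m x) = πG (n x) := DFunLike.congr_fun hsq4 x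
      have hfg' : πF f = πG g := hfg
      simp only [AddMonoidHom.mem_ker, map_sub]
      rw [← hfg', ← hx, h1, sub_self]
    rw [hrow2] at hker
    obtain ⟨s, hs⟩ := hker
    obtain ⟨h, hh⟩ := hπH s
    refine ⟨x + i h, ?_⟩
    apply Subtype.ext
    have : n (x + i h) = g := by
      rw [map_add, hni, hh, hs, add_sub_cancel]
    simp only [toPullback, AddMonoidHom.codRestrict_apply, AddMonoidHom.prod_apply]
    show (m (x + i h), n (x + i h)) = (f, g); rw [map_add m, hiμ, add_zero, hx, this]
  · -- kernel
    ext x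
    simp only [AddMonoidHom.mem_ker, AddMonoidHom.mem_range, AddMonoidHom.coe_comp,
      Function.comp_apply]
    constructor
    · intro hx
      have hx' : m x = 0 ∧ n x = 0 := by
        have := congrArg Subtype.val hx
        exact ⟨congrArg Prod.fst this, congrArg Prod.snd this⟩
      have hxm : x ∈ AddMonoidHom.ker m := hx'.1
      rw [hmidrow] at hxm
      obtain ⟨h, hh⟩ := hxm
      have : σ (πH h) = 0 := by rw [← hni, hh, hx'.2]
      have hπh : πH h = 0 := hσ (by simpa using this)
      have : h ∈ AddMonoidHom.ker πH := hπh
      rw [hcol1] at this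
      obtain ⟨p, hp⟩ := this
      exact ⟨p, by rw [hp, hh]⟩
    · rintro ⟨p, rfl⟩
      apply Subtype.ext
      have h1 : m (i (μ p)) = 0 := hiμ _
      have h2 : n (i (μ p)) = 0 := by rw [hni, hπHμ, map_zero]
      simp only [toPullback, AddMonoidHom.codRestrict_apply, AddMonoidHom.prod_apply]
      show (m (i (μ p)), n (i (μ p))) = (0 : F × G); exact Prod.ext h1 h2
  · -- ker m ⊓ ker n
    ext x
    simp only [AddSubgroup.mem_inf, AddMonoidHom.mem_ker, AddMonoidHom.mem_range,
      AddMonoidHom.coe_comp, Function.comp_apply]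
    constructor
    · rintro ⟨hxm, hxn⟩
      have hxm' : x ∈ AddMonoidHom.ker m := hxm
      rw [hmidrow] at hxm'
      obtain ⟨h, hh⟩ := hxm'
      have : σ (πH h) = 0 := by rw [← hni, hh, hxn]
      have hπh : πH h = 0 := hσ (by simpa using this)
      have : h ∈ AddMonoidHom.ker πH := hπh
      rw [hcol1] at this
      obtain ⟨p, hp⟩ := this
      exact ⟨p, by rw [hp, hh]⟩
    · rintro ⟨p, rfl⟩
      exact ⟨hiμ _, by rw [hni, hπHμ, map_zero]⟩
  · rw [show i.comp μ = j.comp ν from hsq1]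
end

section
/- Let Diagram 1 of abelian groups be given, let (X₁, i₁, j₁, m₁, n₁) and (X₂, i₂, j₂, m₂, n₂) be two extensions of Diagram 1, and let φ : X₁ → X₂ be a group isomorphism satisfying m₂∘φ = m₁, n₂∘φ = n₁, φ∘i₁∘μ = i₂∘μ, and φ∘j₁∘ν = j₂∘ν. Set P₂ = (i₂∘μ)(P) ⊆ X₂. Then the homomorphisms j̃ = j₂ − φ∘j₁ : E → X₂ and ĩ = i₂ − φ∘i₁ : H → X₂ take values in P₂, and satisfy j̃∘ν = 0 and ĩ∘μ = 0. Consequently there is a well-defined group homomorphism λ from the subgroup j₁(E) + i₁(H) of X₁ to P₂ determined by λ(j₁(e) + i₁(h)) = j̃(e) + ĩ(h) for e ∈ E, h ∈ H, and λ vanishes on (i₁∘μ)(P). -/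
universe u

/-- Given two extensions `(X₁, i₁, j₁, m₁, n₁)` and `(X₂, i₂, j₂, m₂, n₂)` of Diagram 1 of
abelian groups and an isomorphism `φ : X₁ → X₂` with `m₂∘φ = m₁`, `n₂∘φ = n₁`,
`φ∘i₁∘μ = i₂∘μ`, `φ∘j₁∘ν = j₂∘ν`, the differences `j̃ = j₂ − φ∘j₁` and `ĩ = i₂ − φ∘i₁`
take values in `P₂ = (i₂∘μ)(P)`, vanish after precomposition with `ν` resp. `μ`, and they
induce a well-defined homomorphism `λ : j₁(E) + i₁(H) → P₂` with
`λ(j₁ e + i₁ h) = j̃ e + ĩ h`, vanishing on `(i₁∘μ)(P)`. -/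
theorem difference_maps_land_in_P2_and_induce_lambda
    {P E R H S G F Q X₁ X₂ : Type u}
    [AddCommGroup P] [AddCommGroup E] [AddCommGroup R] [AddCommGroup H] [AddCommGroup S]
    [AddCommGroup G] [AddCommGroup F] [AddCommGroup Q] [AddCommGroup X₁] [AddCommGroup X₂]
    -- row 1 : 0 → P → E → R → 0
    (ν : P →+ E) (πE : E →+ R)
    (hν : Function.Injective ν) (hπE : Function.Surjective πE)
    (hrow1 : AddMonoidHom.ker πE = AddMonoidHom.range ν)
    -- row 2 : 0 → S → G → Q → 0
    (σ : S →+ G) (πG : G →+ Q)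
    (hσ : Function.Injective σ) (hπG : Function.Surjective πG)
    (hrow2 : AddMonoidHom.ker πG = AddMonoidHom.range σ)
    -- column 1 : 0 → P → H → S → 0
    (μ : P →+ H) (πH : H →+ S)
    (hμ : Function.Injective μ) (hπH : Function.Surjective πH)
    (hcol1 : AddMonoidHom.ker πH = AddMonoidHom.range μ)
    -- column 2 : 0 → R → F → Q → 0
    (ρ : R →+ F) (πF : F →+ Q)
    (hρ : Function.Injective ρ) (hπF : Function.Surjective πF)
    (hcol2 : AddMonoidHom.ker πF = AddMonoidHom.range ρ)
    -- the extension (X₁, i₁, j₁, m₁, n₁) of Diagram 1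
    (i₁ : H →+ X₁) (j₁ : E →+ X₁) (m₁ : X₁ →+ F) (n₁ : X₁ →+ G)
    (hi₁ : Function.Injective i₁) (hm₁ : Function.Surjective m₁)
    (hmidrow₁ : AddMonoidHom.ker m₁ = AddMonoidHom.range i₁)
    (hj₁ : Function.Injective j₁) (hn₁ : Function.Surjective n₁)
    (hmidcol₁ : AddMonoidHom.ker n₁ = AddMonoidHom.range j₁)
    (hsq1₁ : i₁.comp μ = j₁.comp ν)
    (hsq2₁ : m₁.comp j₁ = ρ.comp πE)
    (hsq3₁ : n₁.comp i₁ = σ.comp πH)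
    (hsq4₁ : πF.comp m₁ = πG.comp n₁)
    -- the extension (X₂, i₂, j₂, m₂, n₂) of Diagram 1
    (i₂ : H →+ X₂) (j₂ : E →+ X₂) (m₂ : X₂ →+ F) (n₂ : X₂ →+ G)
    (hi₂ : Function.Injective i₂) (hm₂ : Function.Surjective m₂)
    (hmidrow₂ : AddMonoidHom.ker m₂ = AddMonoidHom.range i₂)
    (hj₂ : Function.Injective j₂) (hn₂ : Function.Surjective n₂)
    (hmidcol₂ : AddMonoidHom.ker n₂ = AddMonoidHom.range j₂)
    (hsq1₂ : i₂.comp μ = j₂.comp ν)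
    (hsq2₂ : m₂.comp j₂ = ρ.comp πE)
    (hsq3₂ : n₂.comp i₂ = σ.comp πH)
    (hsq4₂ : πF.comp m₂ = πG.comp n₂)
    -- the isomorphism φ : X₁ → X₂ compatible with m, n and with i∘μ, j∘ν
    (φ : X₁ ≃+ X₂)
    (hφm : ∀ x, m₂ (φ x) = m₁ x)
    (hφn : ∀ x, n₂ (φ x) = n₁ x)
    (hφiμ : ∀ p : P, φ (i₁ (μ p)) = i₂ (μ p))
    (hφjν : ∀ p : P, φ (j₁ (ν p)) = j₂ (ν p)) :
    -- j̃ and ĩ take values in P₂ = (i₂∘μ)(P)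
    (∀ e : E, j₂ e - φ (j₁ e) ∈ AddMonoidHom.range (i₂.comp μ)) ∧
    (∀ h : H, i₂ h - φ (i₁ h) ∈ AddMonoidHom.range (i₂.comp μ)) ∧
    -- j̃∘ν = 0 and ĩ∘μ = 0
    (∀ p : P, j₂ (ν p) - φ (j₁ (ν p)) = 0) ∧
    (∀ p : P, i₂ (μ p) - φ (i₁ (μ p)) = 0) ∧
    -- the induced homomorphism λ on the subgroup j₁(E) + i₁(H) of X₁
    (∃ lam : ↥(AddMonoidHom.range j₁ ⊔ AddMonoidHom.range i₁ : AddSubgroup X₁) →+ X₂,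
      (∀ (x : ↥(AddMonoidHom.range j₁ ⊔ AddMonoidHom.range i₁ : AddSubgroup X₁))
          (e : E) (h : H), (x : X₁) = j₁ e + i₁ h →
          lam x = (j₂ e - φ (j₁ e)) + (i₂ h - φ (i₁ h))) ∧
      (∀ x, lam x ∈ AddMonoidHom.range (i₂.comp μ)) ∧
      (∀ x : ↥(AddMonoidHom.range j₁ ⊔ AddMonoidHom.range i₁ : AddSubgroup X₁),
          (x : X₁) ∈ AddMonoidHom.range (i₁.comp μ) → lam x = 0)) := by
  -- helper facts
  have hkerm₁ : ∀ h : H, m₁ (i₁ h) = 0 := by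
    intro h
    have : i₁ h ∈ AddMonoidHom.range i₁ := ⟨h, rfl⟩
    rw [← hmidrow₁] at this; exact this
  have hkerm₂ : ∀ h : H, m₂ (i₂ h) = 0 := by
    intro h
    have : i₂ h ∈ AddMonoidHom.range i₂ := ⟨h, rfl⟩
    rw [← hmidrow₂] at this; exact this
  have hkern₁ : ∀ e : E, n₁ (j₁ e) = 0 := by
    intro e
    have : j₁ e ∈ AddMonoidHom.range j₁ := ⟨e, rfl⟩
    rw [← hmidcol₁] at this; exact this
  have hkern₂ : ∀ e : E, n₂ (j₂ e) = 0 := by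
    intro e
    have : j₂ e ∈ AddMonoidHom.range j₂ := ⟨e, rfl⟩
    rw [← hmidcol₂] at this; exact this
  -- (1) j̃ lands in P₂
  have Hj : ∀ e : E, j₂ e - φ (j₁ e) ∈ AddMonoidHom.range (i₂.comp μ) := by
    intro e
    have hm : m₂ (j₂ e - φ (j₁ e)) = 0 := by
      rw [map_sub, hφm]
      have h1 : m₂ (j₂ e) = ρ (πE e) := DFunLike.congr_fun hsq2₂ e
      have h2 : m₁ (j₁ e) = ρ (πE e) := DFunLike.congr_fun hsq2₁ e
      rw [h1, h2, sub_self]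
    have : j₂ e - φ (j₁ e) ∈ AddMonoidHom.ker m₂ := hm
    rw [hmidrow₂] at this
    obtain ⟨h, hh⟩ := this
    have hn : n₂ (i₂ h) = 0 := by
      rw [hh, map_sub, hφn, hkern₂, hkern₁, sub_self]
    have h3 : σ (πH h) = 0 := by
      have := DFunLike.congr_fun hsq3₂ h
      simp only [AddMonoidHom.comp_apply] at this
      rw [← this, hn]
    have h4 : πH h = 0 := hσ (by rw [h3, map_zero])
    have : h ∈ AddMonoidHom.ker πH := h4
    rw [hcol1] at this
    obtain ⟨p, hp⟩ := this
    exact ⟨p, by simp only [AddMonoidHom.comp_apply]; rw [hp, hh]⟩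
  -- (2) ĩ lands in P₂
  have Hi : ∀ h : H, i₂ h - φ (i₁ h) ∈ AddMonoidHom.range (i₂.comp μ) := by
    intro h
    have hn : n₂ (i₂ h - φ (i₁ h)) = 0 := by
      rw [map_sub, hφn]
      have h1 : n₂ (i₂ h) = σ (πH h) := DFunLike.congr_fun hsq3₂ h
      have h2 : n₁ (i₁ h) = σ (πH h) := DFunLike.congr_fun hsq3₁ h
      rw [h1, h2, sub_self]
    have : i₂ h - φ (i₁ h) ∈ AddMonoidHom.ker n₂ := hn
    rw [hmidcol₂] at this
    obtain ⟨e, he⟩ := this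
    have hm : m₂ (j₂ e) = 0 := by
      rw [he, map_sub, hφm, hkerm₂, hkerm₁, sub_self]
    have h3 : ρ (πE e) = 0 := by
      have := DFunLike.congr_fun hsq2₂ e
      simp only [AddMonoidHom.comp_apply] at this
      rw [← this, hm]
    have h4 : πE e = 0 := hρ (by rw [h3, map_zero])
    have : e ∈ AddMonoidHom.ker πE := h4
    rw [hrow1] at this
    obtain ⟨p, hp⟩ := this
    refine ⟨p, ?_⟩
    have hsq : i₂ (μ p) = j₂ (ν p) := DFunLike.congr_fun hsq1₂ p
    simp only [AddMonoidHom.comp_apply]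
    rw [hsq, hp, he]
  have Hjν : ∀ p : P, j₂ (ν p) - φ (j₁ (ν p)) = 0 := by
    intro p; rw [hφjν, sub_self]
  have Hiμ : ∀ p : P, i₂ (μ p) - φ (i₁ (μ p)) = 0 := by
    intro p; rw [hφiμ, sub_self]
  refine ⟨Hj, Hi, Hjν, Hiμ, ?_⟩
  -- key well-definedness lemma
  have key : ∀ (e : E) (h : H) (e' : E) (h' : H),
      j₁ e + i₁ h = j₁ e' + i₁ h' → j₂ e + i₂ h = j₂ e' + i₂ h' := by
    intro e h e' h' heq
    have h1 : j₁ (e - e') = i₁ (h' - h) := by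
      rw [map_sub, map_sub, sub_eq_sub_iff_add_eq_add]
      rw [heq]; abel
    have hm : m₁ (j₁ (e - e')) = 0 := by rw [h1, hkerm₁]
    have h2 : ρ (πE (e - e')) = 0 := by
      have := DFunLike.congr_fun hsq2₁ (e - e')
      simp only [AddMonoidHom.comp_apply] at this
      rw [← this, hm]
    have h3 : πE (e - e') = 0 := hρ (by rw [h2, map_zero])
    have : e - e' ∈ AddMonoidHom.ker πE := h3
    rw [hrow1] at this
    obtain ⟨p, hp⟩ := this
    have h4 : i₁ (μ p) = j₁ (ν p) := DFunLike.congr_fun hsq1₁ p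
    have h5 : i₁ (μ p) = i₁ (h' - h) := by rw [h4, hp, h1]
    have h6 : μ p = h' - h := hi₁ h5
    have h7 : i₂ (μ p) = j₂ (ν p) := DFunLike.congr_fun hsq1₂ p
    have h8 : j₂ (e - e') = i₂ (h' - h) := by rw [← hp, ← h7, h6]
    rw [map_sub, map_sub, sub_eq_sub_iff_add_eq_add] at h8
    rw [h8]; abel
  -- decomposition
  have hdec : ∀ x : ↥(AddMonoidHom.range j₁ ⊔ AddMonoidHom.range i₁ : AddSubgroup X₁),
      ∃ (e : E) (h : H), (x : X₁) = j₁ e + i₁ h := by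
    rintro ⟨x, hx⟩
    rw [AddSubgroup.mem_sup] at hx
    obtain ⟨y, ⟨e, rfl⟩, z, ⟨h, rfl⟩, hyz⟩ := hx
    exact ⟨e, h, hyz.symm⟩
  choose dE dH hd using hdec
  refine ⟨AddMonoidHom.mk'
    (fun x : ↥(AddMonoidHom.range j₁ ⊔ AddMonoidHom.range i₁ : AddSubgroup X₁) =>
      (j₂ (dE x) + i₂ (dH x)) - φ (x : X₁)) ?_, ?_, ?_, ?_⟩
  · intro x y
    have hsum : ((x + y : ↥(AddMonoidHom.range j₁ ⊔ AddMonoidHom.range i₁ :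
        AddSubgroup X₁)) : X₁) = j₁ (dE x + dE y) + i₁ (dH x + dH y) := by
      rw [AddSubgroup.coe_add, hd x, hd y, map_add, map_add]; abel
    have := key _ _ _ _ ((hd (x + y)).symm.trans hsum)
    show (j₂ (dE (x + y)) + i₂ (dH (x + y))) - φ ((x + y : _) : X₁) = _
    rw [this, AddSubgroup.coe_add, map_add, map_add, map_add]
    abel
  · rintro x e h hx
    simp only [AddMonoidHom.mk'_apply]
    have := key _ _ _ _ ((hd x).symm.trans hx)
    rw [this, hx, map_add]
    abel
  · intro x
    simp only [AddMonoidHom.mk'_apply]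
    have hx : ((j₂ (dE x) + i₂ (dH x)) - φ (x : X₁))
        = (j₂ (dE x) - φ (j₁ (dE x))) + (i₂ (dH x) - φ (i₁ (dH x))) := by
      rw [show ((x : X₁)) = j₁ (dE x) + i₁ (dH x) from hd x, map_add]; abel
    rw [hx]
    exact add_mem (Hj _) (Hi _)
  · rintro x ⟨p, hp⟩
    simp only [AddMonoidHom.comp_apply] at hp
    simp only [AddMonoidHom.mk'_apply]
    have hx : (x : X₁) = j₁ 0 + i₁ (μ p) := by rw [map_zero, zero_add, hp]
    have := key _ _ _ _ ((hd x).symm.trans hx)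
    rw [this, hx, map_zero, zero_add, map_zero, zero_add, hφiμ, sub_self]
end

section
/- Let Diagram 1 of abelian groups be given, and suppose P is a divisible abelian group (equivalently, an injective object in the category Ab). Then there exists an extension of Diagram 1, i.e., an abelian group X with homomorphisms i : H → X, j : E → X, m : X → F, n : X → G making Diagram 2 commute with short exact middle row and middle column. -/
universe u

/-- (Existence half of Corollary `corpinj` of the note.) If `P` is a divisible abelian group
(equivalently, an injective object of the category of abelian groups), then Diagram 1 admits
an extension: there exist an abelian group `X` and homomorphisms `i : H → X`, `j : E → X`,
`m : X → F`, `n : X → G` such that the middle row `0 → H → X → F → 0` and the middle column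
`0 → E → X → G → 0` are short exact and all the squares of Diagram 2 commute. -/
theorem extension_exists_of_divisible
    {P E R H S G F Q : Type u}
    [AddCommGroup P] [AddCommGroup E] [AddCommGroup R] [AddCommGroup H] [AddCommGroup S]
    [AddCommGroup G] [AddCommGroup F] [AddCommGroup Q]
    [DivisibleBy P ℤ]
    -- row 1 : 0 → P → E → R → 0
    (ν : P →+ E) (πE : E →+ R)
    (hν : Function.Injective ν) (hπE : Function.Surjective πE)
    (hrow1 : AddMonoidHom.ker πE = AddMonoidHom.range ν)
    -- row 2 : 0 → S → G → Q → 0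
    (σ : S →+ G) (πG : G →+ Q)
    (hσ : Function.Injective σ) (hπG : Function.Surjective πG)
    (hrow2 : AddMonoidHom.ker πG = AddMonoidHom.range σ)
    -- column 1 : 0 → P → H → S → 0
    (μ : P →+ H) (πH : H →+ S)
    (hμ : Function.Injective μ) (hπH : Function.Surjective πH)
    (hcol1 : AddMonoidHom.ker πH = AddMonoidHom.range μ)
    -- column 2 : 0 → R → F → Q → 0
    (ρ : R →+ F) (πF : F →+ Q)
    (hρ : Function.Injective ρ) (hπF : Function.Surjective πF)
    (hcol2 : AddMonoidHom.ker πF = AddMonoidHom.range ρ) :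
    ∃ (X : Type u) (_ : AddCommGroup X), ∃ (i : H →+ X) (j : E →+ X) (m : X →+ F) (n : X →+ G),
      -- middle row 0 → H → X → F → 0 is short exact
      Function.Injective i ∧ Function.Surjective m ∧
      AddMonoidHom.ker m = AddMonoidHom.range i ∧
      -- middle column 0 → E → X → G → 0 is short exact
      Function.Injective j ∧ Function.Surjective n ∧
      AddMonoidHom.ker n = AddMonoidHom.range j ∧
      -- the squares commute
      i.comp μ = j.comp ν ∧
      m.comp j = ρ.comp πE ∧
      n.comp i = σ.comp πH ∧
      πF.comp m = πG.comp n := by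
  -- retractions from divisibility (Baer criterion)
  have baer : Module.Baer ℤ P := Module.Baer.of_divisible P
  obtain ⟨r, hr⟩ := baer.extension_property_addMonoidHom μ hμ (AddMonoidHom.id P)
  obtain ⟨t, ht⟩ := baer.extension_property_addMonoidHom ν hν (AddMonoidHom.id P)
  have hrμ : ∀ p, r (μ p) = p := fun p => DFunLike.congr_fun hr p
  have htν : ∀ p, t (ν p) = p := fun p => DFunLike.congr_fun ht p
  -- compositions vanish
  have hπHμ : ∀ p, πH (μ p) = 0 := fun p => by
    have : μ p ∈ AddMonoidHom.ker πH := hcol1 ▸ ⟨p, rfl⟩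
    exact this
  have hπEν : ∀ p, πE (ν p) = 0 := fun p => by
    have : ν p ∈ AddMonoidHom.ker πE := hrow1 ▸ ⟨p, rfl⟩
    exact this
  have hπFρ : ∀ x, πF (ρ x) = 0 := fun x => by
    have : ρ x ∈ AddMonoidHom.ker πF := hcol2 ▸ ⟨x, rfl⟩
    exact this
  have hπGσ : ∀ s, πG (σ s) = 0 := fun s => by
    have : σ s ∈ AddMonoidHom.ker πG := hrow2 ▸ ⟨s, rfl⟩
    exact this
  -- the pullback of F and G over Q
  let W : AddSubgroup (F × G) :=
    AddMonoidHom.ker ((πF.comp (AddMonoidHom.fst F G)) - (πG.comp (AddMonoidHom.snd F G)))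
  have mem_W : ∀ {fg : F × G}, fg ∈ W ↔ πF fg.1 = πG fg.2 := by
    intro fg
    simp [W, AddMonoidHom.mem_ker, sub_eq_zero]
  refine ⟨P × W, inferInstance, ?_⟩
  -- maps
  refine ⟨{ toFun := fun h => (r h, ⟨(0, σ (πH h)), mem_W.mpr (by simp [hπGσ])⟩),
            map_zero' := by simp, map_add' := by intros; simp },
          { toFun := fun e => (t e, ⟨(ρ (πE e), 0), mem_W.mpr (by simp [hπFρ])⟩),
            map_zero' := by simp, map_add' := by intros; simp },
          ((AddMonoidHom.fst F G).comp W.subtype).comp (AddMonoidHom.snd P W),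
          ((AddMonoidHom.snd F G).comp W.subtype).comp (AddMonoidHom.snd P W),
          ?_, ?_, ?_, ?_, ?_, ?_, ?_, ?_, ?_, ?_⟩
  · -- i injective
    intro h₁ h₂ hyp
    simp only [AddMonoidHom.coe_mk, ZeroHom.coe_mk, Prod.mk.injEq, Subtype.mk.injEq] at hyp
    obtain ⟨h1, h2⟩ := hyp
    have hS : πH h₁ = πH h₂ := hσ h2.2
    have : h₁ - h₂ ∈ AddMonoidHom.ker πH := by simp [AddMonoidHom.mem_ker, hS]
    rw [hcol1] at this
    obtain ⟨p, hp⟩ := this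
    have : r (h₁ - h₂) = 0 := by simp [h1]
    rw [← hp, hrμ] at this
    subst this
    rw [← sub_eq_zero]
    simpa using hp.symm
  · -- m surjective
    intro f
    obtain ⟨g, hg⟩ := hπG (πF f)
    exact ⟨(0, ⟨(f, g), mem_W.mpr hg.symm⟩), rfl⟩
  · -- ker m = range i
    ext x
    obtain ⟨p, ⟨⟨f, g⟩, hw⟩⟩ := x
    simp only [AddMonoidHom.mem_ker, AddMonoidHom.mem_range, AddMonoidHom.coe_comp,
      Function.comp_apply]
    constructor
    · intro hf
      -- f = 0, so πG g = πF 0 = 0, so g = σ s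
      have hf0 : f = 0 := hf
      have : g ∈ AddMonoidHom.ker πG := by
        have := mem_W.mp hw
        simp [hf0] at this
        simpa [AddMonoidHom.mem_ker] using this.symm
      rw [hrow2] at this
      obtain ⟨s, hs⟩ := this
      obtain ⟨h₀, hh₀⟩ := hπH s
      refine ⟨h₀ + μ (p - r h₀), ?_⟩
      simp only [AddMonoidHom.coe_mk, ZeroHom.coe_mk]
      have h1 : r (h₀ + μ (p - r h₀)) = p := by simp [hrμ]
      have h2 : πH (h₀ + μ (p - r h₀)) = s := by simp [hπHμ, hh₀]
      rw [h1, h2]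
      exact Prod.ext rfl (Subtype.ext (Prod.ext hf0.symm hs))
    · rintro ⟨h, hh⟩
      rw [← hh]; rfl
  · -- j injective
    intro e₁ e₂ hyp
    simp only [AddMonoidHom.coe_mk, ZeroHom.coe_mk, Prod.mk.injEq, Subtype.mk.injEq] at hyp
    obtain ⟨h1, h2⟩ := hyp
    have hR : πE e₁ = πE e₂ := hρ h2.1
    have : e₁ - e₂ ∈ AddMonoidHom.ker πE := by simp [AddMonoidHom.mem_ker, hR]
    rw [hrow1] at this
    obtain ⟨p, hp⟩ := this
    have : t (e₁ - e₂) = 0 := by simp [h1]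
    rw [← hp, htν] at this
    subst this
    rw [← sub_eq_zero]
    simpa using hp.symm
  · -- n surjective
    intro g
    obtain ⟨f, hf⟩ := hπF (πG g)
    exact ⟨(0, ⟨(f, g), mem_W.mpr hf⟩), rfl⟩
  · -- ker n = range j
    ext x
    obtain ⟨p, ⟨⟨f, g⟩, hw⟩⟩ := x
    simp only [AddMonoidHom.mem_ker, AddMonoidHom.mem_range, AddMonoidHom.coe_comp,
      Function.comp_apply]
    constructor
    · intro hg
      have hg0 : g = 0 := hg
      have : f ∈ AddMonoidHom.ker πF := by
        have := mem_W.mp hw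
        simp [hg0] at this
        simpa [AddMonoidHom.mem_ker] using this
      rw [hcol2] at this
      obtain ⟨x, hx⟩ := this
      obtain ⟨e₀, he₀⟩ := hπE x
      refine ⟨e₀ + ν (p - t e₀), ?_⟩
      simp only [AddMonoidHom.coe_mk, ZeroHom.coe_mk]
      have h1 : t (e₀ + ν (p - t e₀)) = p := by simp [htν]
      have h2 : πE (e₀ + ν (p - t e₀)) = x := by simp [hπEν, he₀]
      rw [h1, h2]
      exact Prod.ext rfl (Subtype.ext (Prod.ext hx hg0.symm))
    · rintro ⟨e, hh⟩
      rw [← hh]; rfl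
  · -- i ∘ μ = j ∘ ν
    refine AddMonoidHom.ext fun p => ?_
    refine Prod.ext ?_ (Subtype.ext (Prod.ext ?_ ?_))
    · show r (μ p) = t (ν p); rw [hrμ, htν]
    · show (0 : F) = ρ (πE (ν p)); simp [hπEν]
    · show σ (πH (μ p)) = 0; simp [hπHμ]
  · -- m ∘ j = ρ ∘ πE
    ext e
    rfl
  · -- n ∘ i = σ ∘ πH
    ext h
    rfl
  · -- πF ∘ m = πG ∘ n
    ext x
    obtain ⟨p, ⟨fg, hw⟩⟩ := x
    exact mem_W.mp hw
end

section
/- Let Diagram 1 of abelian groups be given, and suppose P is a divisible abelian group (equivalently, an injective object in the category Ab). Then any two extensions (X₁, i₁, j₁, m₁, n₁) and (X₂, i₂, j₂, m₂, n₂) of Diagram 1 admit a compatible isomorphism: there exists a group isomorphism φ : X₁ → X₂ with φ∘i₁ = i₂, φ∘j₁ = j₂, m₂∘φ = m₁, and n₂∘φ = n₁. -/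
set_option maxRecDepth 8000

universe u

/-- (Uniqueness half of Corollary `corpinj` of the note.) If `P` is a divisible abelian group
(equivalently, an injective object of the category of abelian groups), then any two extensions
`(X₁, i₁, j₁, m₁, n₁)` and `(X₂, i₂, j₂, m₂, n₂)` of Diagram 1 admit a compatible isomorphism:
there is a group isomorphism `φ : X₁ → X₂` with `φ∘i₁ = i₂`, `φ∘j₁ = j₂`, `m₂∘φ = m₁` and
`n₂∘φ = n₁`. -/
theorem compatible_iso_of_divisible
    {P E R H S G F Q X₁ X₂ : Type u}
    [AddCommGroup P] [AddCommGroup E] [AddCommGroup R] [AddCommGroup H] [AddCommGroup S]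
    [AddCommGroup G] [AddCommGroup F] [AddCommGroup Q] [AddCommGroup X₁] [AddCommGroup X₂]
    [DivisibleBy P ℤ]
    -- row 1 : 0 → P → E → R → 0
    (ν : P →+ E) (πE : E →+ R)
    (hν : Function.Injective ν) (hπE : Function.Surjective πE)
    (hrow1 : AddMonoidHom.ker πE = AddMonoidHom.range ν)
    -- row 2 : 0 → S → G → Q → 0
    (σ : S →+ G) (πG : G →+ Q)
    (hσ : Function.Injective σ) (hπG : Function.Surjective πG)
    (hrow2 : AddMonoidHom.ker πG = AddMonoidHom.range σ)
    -- column 1 : 0 → P → H → S → 0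
    (μ : P →+ H) (πH : H →+ S)
    (hμ : Function.Injective μ) (hπH : Function.Surjective πH)
    (hcol1 : AddMonoidHom.ker πH = AddMonoidHom.range μ)
    -- column 2 : 0 → R → F → Q → 0
    (ρ : R →+ F) (πF : F →+ Q)
    (hρ : Function.Injective ρ) (hπF : Function.Surjective πF)
    (hcol2 : AddMonoidHom.ker πF = AddMonoidHom.range ρ)
    -- the extension (X₁, i₁, j₁, m₁, n₁) of Diagram 1
    (i₁ : H →+ X₁) (j₁ : E →+ X₁) (m₁ : X₁ →+ F) (n₁ : X₁ →+ G)
    (hi₁ : Function.Injective i₁) (hm₁ : Function.Surjective m₁)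
    (hmidrow₁ : AddMonoidHom.ker m₁ = AddMonoidHom.range i₁)
    (hj₁ : Function.Injective j₁) (hn₁ : Function.Surjective n₁)
    (hmidcol₁ : AddMonoidHom.ker n₁ = AddMonoidHom.range j₁)
    (hsq1₁ : i₁.comp μ = j₁.comp ν)
    (hsq2₁ : m₁.comp j₁ = ρ.comp πE)
    (hsq3₁ : n₁.comp i₁ = σ.comp πH)
    (hsq4₁ : πF.comp m₁ = πG.comp n₁)
    -- the extension (X₂, i₂, j₂, m₂, n₂) of Diagram 1
    (i₂ : H →+ X₂) (j₂ : E →+ X₂) (m₂ : X₂ →+ F) (n₂ : X₂ →+ G)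
    (hi₂ : Function.Injective i₂) (hm₂ : Function.Surjective m₂)
    (hmidrow₂ : AddMonoidHom.ker m₂ = AddMonoidHom.range i₂)
    (hj₂ : Function.Injective j₂) (hn₂ : Function.Surjective n₂)
    (hmidcol₂ : AddMonoidHom.ker n₂ = AddMonoidHom.range j₂)
    (hsq1₂ : i₂.comp μ = j₂.comp ν)
    (hsq2₂ : m₂.comp j₂ = ρ.comp πE)
    (hsq3₂ : n₂.comp i₂ = σ.comp πH)
    (hsq4₂ : πF.comp m₂ = πG.comp n₂) :
    ∃ φ : X₁ ≃+ X₂,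
      (∀ h : H, φ (i₁ h) = i₂ h) ∧
      (∀ e : E, φ (j₁ e) = j₂ e) ∧
      (∀ x : X₁, m₂ (φ x) = m₁ x) ∧
      (∀ x : X₁, n₂ (φ x) = n₁ x) := by

  classical
  -- pointwise versions of the commuting squares
  have hm1j1 : ∀ a, m₁ (j₁ a) = ρ (πE a) := fun a => DFunLike.congr_fun hsq2₁ a
  have hm2j2 : ∀ a, m₂ (j₂ a) = ρ (πE a) := fun a => DFunLike.congr_fun hsq2₂ a
  have hn1i1 : ∀ a, n₁ (i₁ a) = σ (πH a) := fun a => DFunLike.congr_fun hsq3₁ a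
  have hn2i2 : ∀ a, n₂ (i₂ a) = σ (πH a) := fun a => DFunLike.congr_fun hsq3₂ a
  have hij1 : ∀ p, i₁ (μ p) = j₁ (ν p) := fun p => DFunLike.congr_fun hsq1₁ p
  have hij2 : ∀ p, i₂ (μ p) = j₂ (ν p) := fun p => DFunLike.congr_fun hsq1₂ p
  have hfq1 : ∀ x, πF (m₁ x) = πG (n₁ x) := fun x => DFunLike.congr_fun hsq4₁ x
  have hfq2 : ∀ x, πF (m₂ x) = πG (n₂ x) := fun x => DFunLike.congr_fun hsq4₂ x
  have hm1i1 : ∀ a, m₁ (i₁ a) = 0 := fun a => by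
    have hmem : i₁ a ∈ AddMonoidHom.range i₁ := AddMonoidHom.mem_range.mpr ⟨a, rfl⟩
    rw [← hmidrow₁] at hmem
    exact AddMonoidHom.mem_ker.mp hmem
  have hm2i2 : ∀ a, m₂ (i₂ a) = 0 := fun a => by
    have hmem : i₂ a ∈ AddMonoidHom.range i₂ := AddMonoidHom.mem_range.mpr ⟨a, rfl⟩
    rw [← hmidrow₂] at hmem
    exact AddMonoidHom.mem_ker.mp hmem
  have hn1j1 : ∀ a, n₁ (j₁ a) = 0 := fun a => by
    have hmem : j₁ a ∈ AddMonoidHom.range j₁ := AddMonoidHom.mem_range.mpr ⟨a, rfl⟩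
    rw [← hmidcol₁] at hmem
    exact AddMonoidHom.mem_ker.mp hmem
  have hn2j2 : ∀ a, n₂ (j₂ a) = 0 := fun a => by
    have hmem : j₂ a ∈ AddMonoidHom.range j₂ := AddMonoidHom.mem_range.mpr ⟨a, rfl⟩
    rw [← hmidcol₂] at hmem
    exact AddMonoidHom.mem_ker.mp hmem
  have hπHμ : ∀ p, πH (μ p) = 0 := fun p => by
    have hmem : μ p ∈ AddMonoidHom.range μ := AddMonoidHom.mem_range.mpr ⟨p, rfl⟩
    rw [← hcol1] at hmem
    exact AddMonoidHom.mem_ker.mp hmem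
  -- kernel-to-range converters
  have hkerm1 : ∀ x, m₁ x = 0 → ∃ a, i₁ a = x := fun x hx => by
    have hmem : x ∈ AddMonoidHom.ker m₁ := AddMonoidHom.mem_ker.mpr hx
    rw [hmidrow₁] at hmem
    exact AddMonoidHom.mem_range.mp hmem
  have hkerm2 : ∀ x, m₂ x = 0 → ∃ a, i₂ a = x := fun x hx => by
    have hmem : x ∈ AddMonoidHom.ker m₂ := AddMonoidHom.mem_ker.mpr hx
    rw [hmidrow₂] at hmem
    exact AddMonoidHom.mem_range.mp hmem
  have hkerπG : ∀ g, πG g = 0 → ∃ s, σ s = g := fun g hg => by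
    have hmem : g ∈ AddMonoidHom.ker πG := AddMonoidHom.mem_ker.mpr hg
    rw [hrow2] at hmem
    exact AddMonoidHom.mem_range.mp hmem
  have hkerπH : ∀ h, πH h = 0 → ∃ p, μ p = h := fun h hh => by
    have hmem : h ∈ AddMonoidHom.ker πH := AddMonoidHom.mem_ker.mpr hh
    rw [hcol1] at hmem
    exact AddMonoidHom.mem_range.mp hmem
  -- elements killed by both m and n come from P
  have hPker1 : ∀ x, m₁ x = 0 → n₁ x = 0 → ∃ p, i₁ (μ p) = x := by
    intro x hm hn
    obtain ⟨a, rfl⟩ := hkerm1 x hm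
    rw [hn1i1] at hn
    have hpa : πH a = 0 := hσ (by rw [hn, map_zero])
    obtain ⟨p, hp⟩ := hkerπH a hpa
    exact ⟨p, by rw [hp]⟩
  have hPker2 : ∀ x, m₂ x = 0 → n₂ x = 0 → ∃ p, i₂ (μ p) = x := by
    intro x hm hn
    obtain ⟨a, rfl⟩ := hkerm2 x hm
    rw [hn2i2] at hn
    have hpa : πH a = 0 := hσ (by rw [hn, map_zero])
    obtain ⟨p, hp⟩ := hkerπH a hpa
    exact ⟨p, by rw [hp]⟩
  -- surjectivity of "matching" in both directions
  have hsurj2 : ∀ x : X₁, ∃ y : X₂, m₂ y = m₁ x ∧ n₂ y = n₁ x := by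
    intro x
    obtain ⟨y', hy'⟩ := hm₂ (m₁ x)
    have hq0 : πG (n₁ x - n₂ y') = 0 := by
      rw [map_sub, ← hfq1, ← hfq2, hy', sub_self]
    obtain ⟨s, hs⟩ := hkerπG _ hq0
    obtain ⟨h, hh⟩ := hπH s
    refine ⟨y' + i₂ h, ?_, ?_⟩
    · rw [map_add, hm2i2, add_zero, hy']
    · rw [map_add, hn2i2, hh, hs]; abel
  have hsurj1 : ∀ y : X₂, ∃ x : X₁, m₁ x = m₂ y ∧ n₁ x = n₂ y := by
    intro y
    obtain ⟨x', hx'⟩ := hm₁ (m₂ y)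
    have hq0 : πG (n₂ y - n₁ x') = 0 := by
      rw [map_sub, ← hfq1, ← hfq2, hx', sub_self]
    obtain ⟨s, hs⟩ := hkerπG _ hq0
    obtain ⟨h, hh⟩ := hπH s
    refine ⟨x' + i₁ h, ?_, ?_⟩
    · rw [map_add, hm1i1, add_zero, hx']
    · rw [map_add, hn1i1, hh, hs]; abel
  -- the pullback subgroup Y of X₁ × X₂
  let Y : AddSubgroup (X₁ × X₂) :=
    { carrier := {w | m₂ w.2 = m₁ w.1 ∧ n₂ w.2 = n₁ w.1}
      zero_mem' := by simp
      add_mem' := by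
        rintro a b ⟨ha1, ha2⟩ ⟨hb1, hb2⟩
        exact ⟨by simp only [Prod.fst_add, Prod.snd_add, map_add, ha1, hb1],
               by simp only [Prod.fst_add, Prod.snd_add, map_add, ha2, hb2]⟩
      neg_mem' := by
        rintro a ⟨ha1, ha2⟩
        exact ⟨by simp only [Prod.fst_neg, Prod.snd_neg, map_neg, ha1],
               by simp only [Prod.fst_neg, Prod.snd_neg, map_neg, ha2]⟩ }
  have hYmem : ∀ w : X₁ × X₂, w ∈ Y ↔ (m₂ w.2 = m₁ w.1 ∧ n₂ w.2 = n₁ w.1) := fun w => Iff.rfl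
  -- the subgroup Z of canonically matched pairs
  let Z : AddSubgroup (X₁ × X₂) :=
    { carrier := {w | ∃ p h e, w.1 = i₁ h + j₁ e ∧ w.2 = i₂ h + j₂ e + i₂ (μ p)}
      zero_mem' := ⟨0, 0, 0, by simp⟩
      add_mem' := by
        rintro a b ⟨p, h, e, ha1, ha2⟩ ⟨p', h', e', hb1, hb2⟩
        refine ⟨p + p', h + h', e + e', ?_, ?_⟩
        · simp only [Prod.fst_add, map_add, ha1, hb1]; abel
        · simp only [Prod.snd_add, map_add, ha2, hb2]; abel
      neg_mem' := by
        rintro a ⟨p, h, e, ha1, ha2⟩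
        refine ⟨-p, -h, -e, ?_, ?_⟩
        · simp only [Prod.fst_neg, map_neg, ha1]; abel
        · simp only [Prod.snd_neg, map_neg, ha2]; abel }
  have hZmem : ∀ w : X₁ × X₂,
      w ∈ Z ↔ ∃ p h e, w.1 = i₁ h + j₁ e ∧ w.2 = i₂ h + j₂ e + i₂ (μ p) := fun w => Iff.rfl
  have hZY : Z ≤ Y := by
    rintro w ⟨p, h, e, h1, h2⟩
    constructor
    · rw [h1, h2]
      simp only [map_add, hm2i2, hm2j2, hm1i1, hm1j1, zero_add, add_zero]
    · rw [h1, h2]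
      simp only [map_add, hn2i2, hn2j2, hn1i1, hn1j1, hπHμ, map_zero, zero_add, add_zero]
  -- uniqueness of the "P-coordinate" in a Z-representation
  have hzero : ∀ (p : P) (h : H) (e : E),
      (0 : X₁) = i₁ h + j₁ e → (0 : X₂) = i₂ h + j₂ e + i₂ (μ p) → p = 0 := by
    intro p h e he1 he2
    have h1 : i₁ h = -(j₁ e) := eq_neg_of_add_eq_zero_left he1.symm
    have h2 : σ (πH h) = 0 := by rw [← hn1i1, h1, map_neg, hn1j1, neg_zero]
    have h3 : πH h = 0 := hσ (by rw [h2, map_zero])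
    obtain ⟨p₀, hp₀⟩ := hkerπH h h3
    have h4 : ν p₀ = -e := hj₁ (by rw [← hij1, hp₀, h1, map_neg])
    have h5 : i₂ h = -(j₂ e) := by rw [← hp₀, hij2, h4, map_neg]
    rw [h5, neg_add_cancel, zero_add] at he2
    have h6 : μ p = 0 := hi₂ (by rw [← he2, map_zero])
    exact hμ (by rw [h6, map_zero])
  have huniq : ∀ (w : X₁ × X₂) (p p' : P),
      (∃ h e, w.1 = i₁ h + j₁ e ∧ w.2 = i₂ h + j₂ e + i₂ (μ p)) →
      (∃ h e, w.1 = i₁ h + j₁ e ∧ w.2 = i₂ h + j₂ e + i₂ (μ p')) → p = p' := by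
    rintro w p p' ⟨h, e, a1, a2⟩ ⟨h', e', b1, b2⟩
    have key1 : (i₁ h + j₁ e) - (i₁ h' + j₁ e') = 0 := sub_eq_zero.mpr (a1.symm.trans b1)
    have key2 : (i₂ h + j₂ e + i₂ (μ p)) - (i₂ h' + j₂ e' + i₂ (μ p')) = 0 :=
      sub_eq_zero.mpr (a2.symm.trans b2)
    have e1 : (0 : X₁) = i₁ (h - h') + j₁ (e - e') := by
      rw [map_sub, map_sub, ← key1]; abel
    have e2 : (0 : X₂) = i₂ (h - h') + j₂ (e - e') + i₂ (μ (p - p')) := by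
      rw [map_sub, map_sub, map_sub, map_sub, ← key2]; abel
    have := hzero (p - p') (h - h') (e - e') e1 e2
    exact sub_eq_zero.mp this
  -- the retraction r₀ : Z →+ P
  let r0f : Z → P := fun z => ((hZmem _).mp z.2).choose
  have hr0spec : ∀ z : Z, ∃ h e, (z : X₁ × X₂).1 = i₁ h + j₁ e ∧
      (z : X₁ × X₂).2 = i₂ h + j₂ e + i₂ (μ (r0f z)) :=
    fun z => ((hZmem _).mp z.2).choose_spec
  have hr0add : ∀ a b : Z, r0f (a + b) = r0f a + r0f b := by
    intro a b
    obtain ⟨h, e, a1, a2⟩ := hr0spec a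
    obtain ⟨h', e', b1, b2⟩ := hr0spec b
    refine huniq ((a : X₁ × X₂) + (b : X₁ × X₂)) _ (r0f a + r0f b) (hr0spec (a + b))
      ⟨h + h', e + e', ?_, ?_⟩
    · show ((a : X₁ × X₂) + (b : X₁ × X₂)).1 = i₁ (h + h') + j₁ (e + e')
      rw [Prod.fst_add, a1, b1, map_add, map_add]; abel
    · show ((a : X₁ × X₂) + (b : X₁ × X₂)).2 = i₂ (h + h') + j₂ (e + e') + i₂ (μ (r0f a + r0f b))
      rw [Prod.snd_add, a2, b2, map_add, map_add, map_add, map_add]; abel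
  let r₀ : Z →+ P := AddMonoidHom.mk' r0f hr0add
  have hr0val : ∀ (z : Z) (p : P),
      (∃ h e, (z : X₁ × X₂).1 = i₁ h + j₁ e ∧
        (z : X₁ × X₂).2 = i₂ h + j₂ e + i₂ (μ p)) → r₀ z = p := by
    intro z p hp
    exact huniq (z : X₁ × X₂) (r0f z) p (hr0spec z) hp
  -- extend r₀ to r : Y →+ P using injectivity of P
  have hinjP : Module.Injective ℤ P := Module.Baer.injective (Module.Baer.of_divisible P)
  obtain ⟨rL, hrL⟩ := hinjP.out (AddSubgroup.inclusion hZY).toIntLinearMap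
    (AddSubgroup.inclusion_injective hZY) r₀.toIntLinearMap
  set r : Y →+ P := rL.toAddMonoidHom with hr_def
  have hrval : ∀ (y : Y) (p : P),
      (∃ h e, (y : X₁ × X₂).1 = i₁ h + j₁ e ∧
        (y : X₁ × X₂).2 = i₂ h + j₂ e + i₂ (μ p)) → r y = p := by
    intro y p hp
    have hyZ : (y : X₁ × X₂) ∈ Z := by
      obtain ⟨h, e, h1, h2⟩ := hp
      exact ⟨p, h, e, h1, h2⟩
    have hthis := hrL (⟨(y : X₁ × X₂), hyZ⟩ : Z)
    simp only [AddMonoidHom.coe_toIntLinearMap] at hthis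
    have hy : AddSubgroup.inclusion hZY (⟨(y : X₁ × X₂), hyZ⟩ : Z) = y := Subtype.ext rfl
    rw [hy] at hthis
    have hry : r y = r₀ (⟨(y : X₁ × X₂), hyZ⟩ : Z) := hthis
    rw [hry]
    exact hr0val _ p hp
  -- the map ψ : Y →+ X₂
  let ψ : Y →+ X₂ := AddMonoidHom.mk' (fun y => (y : X₁ × X₂).2 - i₂ (μ (r y))) (by
    intro a b
    simp only [map_add, AddSubgroup.coe_add, Prod.snd_add]
    abel)
  -- projection q : Y →+ X₁
  let q : Y →+ X₁ := (AddMonoidHom.fst X₁ X₂).comp Y.subtype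
  have hqsurj : Function.Surjective q := by
    intro x
    obtain ⟨y, h1, h2⟩ := hsurj2 x
    exact ⟨⟨(x, y), ⟨h1, h2⟩⟩, rfl⟩
  have hψker : ∀ y : Y, q y = 0 → ψ y = 0 := by
    intro y hy
    have hy1 : (y : X₁ × X₂).1 = 0 := hy
    have hm : m₂ (y : X₁ × X₂).2 = 0 := by rw [y.2.1, hy1, map_zero]
    have hn : n₂ (y : X₁ × X₂).2 = 0 := by rw [y.2.2, hy1, map_zero]
    obtain ⟨p, hp⟩ := hPker2 _ hm hn
    have hrp : r y = p := by
      refine hrval y p ⟨0, 0, ?_, ?_⟩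
      · rw [hy1]; simp
      · rw [← hp]; simp
    show (y : X₁ × X₂).2 - i₂ (μ (r y)) = 0
    rw [hrp, hp, sub_self]
  have hψcongr : ∀ y₁ y₂ : Y, q y₁ = q y₂ → ψ y₁ = ψ y₂ := by
    intro y₁ y₂ hq12
    have h0 := hψker (y₁ - y₂) (by rw [map_sub, hq12, sub_self])
    rw [map_sub] at h0
    exact sub_eq_zero.mp h0
  -- the homomorphism φ₀ : X₁ →+ X₂
  have hsec : ∀ x : X₁, q ((hqsurj x).choose) = x := fun x => (hqsurj x).choose_spec
  let φ₀ : X₁ →+ X₂ := AddMonoidHom.mk' (fun x => ψ ((hqsurj x).choose)) (by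
    intro a b
    rw [← map_add ψ]
    exact hψcongr _ _ (by rw [map_add, hsec, hsec, hsec]))
  have hφψ : ∀ y : Y, φ₀ (q y) = ψ y := fun y => hψcongr _ y (hsec (q y))
  -- key properties of φ₀
  have hφm : ∀ x, m₂ (φ₀ x) = m₁ x := by
    intro x
    set y := (hqsurj x).choose with hy_def
    have : φ₀ x = (y : X₁ × X₂).2 - i₂ (μ (r y)) := rfl
    rw [this, map_sub, hm2i2, sub_zero, y.2.1]
    exact congrArg m₁ (hsec x)
  have hφn : ∀ x, n₂ (φ₀ x) = n₁ x := by
    intro x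
    set y := (hqsurj x).choose with hy_def
    have : φ₀ x = (y : X₁ × X₂).2 - i₂ (μ (r y)) := rfl
    rw [this, map_sub, hn2i2, hπHμ, map_zero, sub_zero, y.2.2]
    exact congrArg n₁ (hsec x)
  have hφi : ∀ h, φ₀ (i₁ h) = i₂ h := by
    intro h
    have hyY : ((i₁ h, i₂ h) : X₁ × X₂) ∈ Y := by
      constructor
      · rw [hm2i2, hm1i1]
      · rw [hn2i2, hn1i1]
    set y : Y := ⟨(i₁ h, i₂ h), hyY⟩ with hy_def
    have h1 : φ₀ (i₁ h) = ψ y := hφψ y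
    have h2 : r y = 0 := by
      refine hrval y 0 ⟨h, 0, by simp [hy_def], by simp [hy_def]⟩
    rw [h1]
    show (y : X₁ × X₂).2 - i₂ (μ (r y)) = i₂ h
    rw [h2, map_zero, map_zero, sub_zero]
  have hφj : ∀ e, φ₀ (j₁ e) = j₂ e := by
    intro e
    have hyY : ((j₁ e, j₂ e) : X₁ × X₂) ∈ Y := by
      constructor
      · rw [hm2j2, hm1j1]
      · rw [hn2j2, hn1j1]
    set y : Y := ⟨(j₁ e, j₂ e), hyY⟩ with hy_def
    have h1 : φ₀ (j₁ e) = ψ y := hφψ y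
    have h2 : r y = 0 := by
      refine hrval y 0 ⟨0, e, by simp [hy_def], by simp [hy_def]⟩
    rw [h1]
    show (y : X₁ × X₂).2 - i₂ (μ (r y)) = j₂ e
    rw [h2, map_zero, map_zero, sub_zero]
  -- bijectivity
  have hinj : Function.Injective φ₀ := by
    rw [injective_iff_map_eq_zero]
    intro x hx
    have hm : m₁ x = 0 := by rw [← hφm x, hx, map_zero]
    have hn : n₁ x = 0 := by rw [← hφn x, hx, map_zero]
    obtain ⟨p, rfl⟩ := hPker1 x hm hn
    have : i₂ (μ p) = 0 := by rw [← hφi (μ p), hx]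
    have hp0 : μ p = 0 := hi₂ (by rw [this, map_zero])
    rw [hμ (by rw [hp0, map_zero] : μ p = μ 0), map_zero, map_zero]
  have hsurj : Function.Surjective φ₀ := by
    intro y
    obtain ⟨x, h1, h2⟩ := hsurj1 y
    have hm : m₂ (φ₀ x - y) = 0 := by rw [map_sub, hφm, h1, sub_self]
    have hn : n₂ (φ₀ x - y) = 0 := by rw [map_sub, hφn, h2, sub_self]
    obtain ⟨p, hp⟩ := hPker2 _ hm hn
    refine ⟨x - i₁ (μ p), ?_⟩
    rw [map_sub, hφi, hp]
    abel
  refine ⟨AddEquiv.ofBijective φ₀ ⟨hinj, hsurj⟩, fun h => hφi h, fun e => hφj e,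
    fun x => hφm x, fun x => hφn x⟩
end
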